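/- Let X and Y be Banach spaces. If (X × Y, K) has property L_{o,o} for bilinear forms, then every tensor in X ⊗π Y can be approximated in the projective norm by tensors which attain their projective norm; that is, NAπ(X ⊗π Y) is ‖·‖π-dense in X ⊗π Y. -/

import Mathlib

noncomputable section

open scoped BigOperators

/-- The predicate stating that the Banach space `Z`, together with the bounded bilinear map
`t : X → Y → Z` and the correspondence `lift` between operators `X → Y*` and functionals on `Z`,
realizes the projective tensor product `X ⊗π Y`.  The field `norm_eq_sInf` says that the norm of
`Z` is the projective norm: `‖z‖π = inf {∑ₙ ‖xₙ‖‖yₙ‖ : z = ∑ₙ xₙ ⊗ yₙ}`, and the `lift` fields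
encode the canonical isometric identification `(X ⊗π Y)* = L(X, Y*)`. -/
structure IsProjTensorProduct (X Y Z : Type*)
    [NormedAddCommGroup X] [NormedSpace ℝ X]
    [NormedAddCommGroup Y] [NormedSpace ℝ Y]
    [NormedAddCommGroup Z] [NormedSpace ℝ Z]
    (t : X →L[ℝ] Y →L[ℝ] Z)
    (lift : (X →L[ℝ] (Y →L[ℝ] ℝ)) → (Z →L[ℝ] ℝ)) : Prop where
  norm_tmul_le : ∀ (x : X) (y : Y), ‖t x y‖ ≤ ‖x‖ * ‖y‖
  exists_rep : ∀ z : Z, ∃ (x : ℕ → X) (y : ℕ → Y),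
    Summable (fun n => ‖x n‖ * ‖y n‖) ∧ HasSum (fun n => t (x n) (y n)) z
  norm_eq_sInf : ∀ z : Z, ‖z‖ = sInf {r : ℝ | ∃ (x : ℕ → X) (y : ℕ → Y),
    Summable (fun n => ‖x n‖ * ‖y n‖) ∧ HasSum (fun n => t (x n) (y n)) z ∧
    r = ∑' n, ‖x n‖ * ‖y n‖}
  lift_tmul : ∀ (G : X →L[ℝ] (Y →L[ℝ] ℝ)) (x : X) (y : Y), lift G (t x y) = G x y
  norm_lift : ∀ G : X →L[ℝ] (Y →L[ℝ] ℝ), ‖lift G‖ = ‖G‖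
  lift_surjective : Function.Surjective lift

/-- An element `z ∈ X ⊗π Y` attains its projective norm if it admits a representation
`z = ∑ₙ xₙ ⊗ yₙ` with `∑ₙ ‖xₙ‖‖yₙ‖ < ∞` and `‖z‖π = ∑ₙ ‖xₙ‖‖yₙ‖`. -/
def AttainsProjNorm {X Y Z : Type*}
    [NormedAddCommGroup X] [NormedSpace ℝ X]
    [NormedAddCommGroup Y] [NormedSpace ℝ Y]
    [NormedAddCommGroup Z] [NormedSpace ℝ Z]
    (t : X →L[ℝ] Y →L[ℝ] Z) (z : Z) : Prop :=
  ∃ (x : ℕ → X) (y : ℕ → Y),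
    Summable (fun n => ‖x n‖ * ‖y n‖) ∧ HasSum (fun n => t (x n) (y n)) z ∧
    ‖z‖ = ∑' n, ‖x n‖ * ‖y n‖

/-- `(X × Y, ℝ)` has property L_{o,o} for bilinear forms. -/
def BilinLoo (X Y : Type*) [NormedAddCommGroup X] [NormedSpace ℝ X]
    [NormedAddCommGroup Y] [NormedSpace ℝ Y] : Prop :=
  ∀ B : X →L[ℝ] Y →L[ℝ] ℝ, ‖B‖ = 1 → ∀ ε : ℝ, 0 < ε → ∃ η : ℝ, 0 < η ∧
    ∀ (x : X) (y : Y), ‖x‖ = 1 → ‖y‖ = 1 → 1 - η < |B x y| →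
      ∃ (x₀ : X) (y₀ : Y), ‖x₀‖ = 1 ∧ ‖y₀‖ = 1 ∧ |B x₀ y₀| = 1 ∧
        ‖x - x₀‖ < ε ∧ ‖y - y₀‖ < ε

set_option maxHeartbeats 2000000 in
/-- If `(X × Y, ℝ)` has property L_{o,o} for bilinear forms, then the set of
norm-attaining tensors is dense in `X ⊗π Y`. -/
theorem tensor_normAttaining_dense_of_bilinLoo
    {X Y Z : Type*} [NormedAddCommGroup X] [NormedSpace ℝ X] [CompleteSpace X]
    [NormedAddCommGroup Y] [NormedSpace ℝ Y] [CompleteSpace Y]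
    [NormedAddCommGroup Z] [NormedSpace ℝ Z] [CompleteSpace Z]
    (t : X →L[ℝ] Y →L[ℝ] Z) (lift : (X →L[ℝ] (Y →L[ℝ] ℝ)) → (Z →L[ℝ] ℝ))
    (h : IsProjTensorProduct X Y Z t lift)
    (hL : BilinLoo X Y) :
    Dense {z : Z | AttainsProjNorm t z} := by
  classical
  rw [Metric.dense_iff]
  intro z ε hε
  have hzero : AttainsProjNorm t (0 : Z) := by
    refine ⟨fun _ => 0, fun _ => 0, by simpa using summable_zero, by
      simpa using hasSum_zero, by simp⟩
  by_cases hz0 : z = 0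
  · exact ⟨0, by simpa [hz0] using hε, hzero⟩
  -- norming functional
  obtain ⟨φ, hφ1, hφz⟩ := exists_dual_vector ℝ z (norm_ne_zero_iff.mpr hz0)
  obtain ⟨B, hB⟩ := h.lift_surjective φ
  have hBnorm : ‖B‖ = 1 := by rw [← h.norm_lift B, hB, hφ1]
  set r := ‖z‖ with hr
  have hrpos : 0 < r := norm_pos_iff.mpr hz0
  -- parameters
  set ε₀ : ℝ := min (ε / (8 * (r + 1))) (1/8) with hε₀def
  have hε₀pos : 0 < ε₀ := lt_min (by positivity) (by norm_num)
  have hε₀le : ε₀ ≤ 1/8 := min_le_right _ _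
  have hε₀le' : ε₀ ≤ ε / (8 * (r + 1)) := min_le_left _ _
  obtain ⟨η₀, hη₀pos, hη₀⟩ := hL B hBnorm ε₀ hε₀pos
  set η : ℝ := min η₀ (1/4) with hηdef
  have hηpos : 0 < η := lt_min hη₀pos (by norm_num)
  have hηle : η ≤ 1/4 := min_le_right _ _
  have hη : ∀ (u : X) (v : Y), ‖u‖ = 1 → ‖v‖ = 1 → 1 - η < |B u v| →
      ∃ (x₀ : X) (y₀ : Y), ‖x₀‖ = 1 ∧ ‖y₀‖ = 1 ∧ |B x₀ y₀| = 1 ∧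
        ‖u - x₀‖ < ε₀ ∧ ‖v - y₀‖ < ε₀ := by
    intro u v hu hv huv
    exact hη₀ u v hu hv (lt_of_le_of_lt (by
      have := min_le_left η₀ (1/4); linarith) huv)
  set δ : ℝ := min (η * ε / 4) 1 with hδdef
  have hδpos : 0 < δ := lt_min (by positivity) one_pos
  have hδle1 : δ ≤ 1 := min_le_right _ _
  have hδle : δ ≤ η * ε / 4 := min_le_left _ _
  -- near-optimal representation
  have hsetne : {R : ℝ | ∃ (x : ℕ → X) (y : ℕ → Y),
      Summable (fun n => ‖x n‖ * ‖y n‖) ∧ HasSum (fun n => t (x n) (y n)) z ∧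
      R = ∑' n, ‖x n‖ * ‖y n‖}.Nonempty := by
    obtain ⟨x, y, hs, hhs⟩ := h.exists_rep z
    exact ⟨_, x, y, hs, hhs, rfl⟩
  obtain ⟨R, hRmem, hRlt⟩ := Real.lt_sInf_add_pos hsetne hδpos
  obtain ⟨x, y, hsum, hz, hReq⟩ := hRmem
  set lam : ℕ → ℝ := fun n => ‖x n‖ * ‖y n‖ with hlamdef
  have hlamnn : ∀ n, 0 ≤ lam n := fun n => by positivity
  set S : ℝ := ∑' n, lam n with hSdef
  have hS : S < r + δ := by
    have h0 : sInf {R : ℝ | ∃ (x : ℕ → X) (y : ℕ → Y),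
        Summable (fun n => ‖x n‖ * ‖y n‖) ∧ HasSum (fun n => t (x n) (y n)) z ∧
        R = ∑' n, ‖x n‖ * ‖y n‖} = r := (h.norm_eq_sInf z).symm
    rw [h0] at hRlt
    have hSR : S = R := by rw [hSdef]; exact hReq.symm
    rwa [hSR]
  -- the functional applied to the representation
  have hφz' : φ z = r := by exact_mod_cast hφz
  have hBsum : HasSum (fun n => B (x n) (y n)) r := by
    have h1 : HasSum (fun n => φ (t (x n) (y n))) (φ z) := φ.hasSum hz
    rw [hφz'] at h1
    convert h1 using 2 with n
    rw [← hB, h.lift_tmul]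
  have habs : ∀ n, |B (x n) (y n)| ≤ lam n := by
    intro n
    have h1 : ‖B (x n) (y n)‖ ≤ ‖B (x n)‖ * ‖y n‖ := (B (x n)).le_opNorm (y n)
    have h2 : ‖B (x n)‖ ≤ ‖B‖ * ‖x n‖ := B.le_opNorm (x n)
    have h3 : ‖B (x n)‖ * ‖y n‖ ≤ (‖B‖ * ‖x n‖) * ‖y n‖ := by
      apply mul_le_mul_of_nonneg_right h2 (norm_nonneg _)
    rw [Real.norm_eq_abs] at h1
    calc |B (x n) (y n)| ≤ (‖B‖ * ‖x n‖) * ‖y n‖ := le_trans h1 h3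
      _ = lam n := by rw [hBnorm]; ring
  have hBle : ∀ n, B (x n) (y n) ≤ lam n := fun n =>
    le_trans (le_abs_self _) (habs n)
  -- the good-index predicate
  set Good : ℕ → Prop := fun n => (1 - η) * lam n < B (x n) (y n) with hGooddef
  -- construct perturbed pairs
  have key : ∀ n, ∃ p : X × Y, Good n →
      ‖p.1‖ = 1 ∧ ‖p.2‖ = 1 ∧ B p.1 p.2 = 1 ∧
      ‖t (x n) (y n) - lam n • t p.1 p.2‖ ≤ 2 * ε₀ * lam n := by
    intro n
    by_cases hg : Good n
    swap
    · exact ⟨(0, 0), fun hgg => absurd hgg hg⟩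
    have hlampos : 0 < lam n := by
      rcases lt_or_eq_of_le (hlamnn n) with h' | h'
      · exact h'
      · exfalso
        have hb0 : B (x n) (y n) = 0 := by
          have := habs n; rw [← h'] at this
          exact abs_eq_zero.mp (le_antisymm (by simpa using this) (abs_nonneg _))
        have := hg
        rw [hGooddef] at this
        simp only [← h', mul_zero, hb0] at this
        exact lt_irrefl 0 this
    have hxne : x n ≠ 0 := by
      intro hx; rw [hlamdef] at hlampos; simp [hx] at hlampos
    have hyne : y n ≠ 0 := by
      intro hy; rw [hlamdef] at hlampos; simp [hy] at hlampos
    set u : X := ‖x n‖⁻¹ • x n with hudef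
    set v : Y := ‖y n‖⁻¹ • y n with hvdef
    have hu1 : ‖u‖ = 1 := by
      rw [hudef, norm_smul, norm_inv, norm_norm,
        inv_mul_cancel₀ (norm_ne_zero_iff.mpr hxne)]
    have hv1 : ‖v‖ = 1 := by
      rw [hvdef, norm_smul, norm_inv, norm_norm,
        inv_mul_cancel₀ (norm_ne_zero_iff.mpr hyne)]
    have hBuv : B u v = (lam n)⁻¹ * B (x n) (y n) := by
      have hlameq : lam n = ‖x n‖ * ‖y n‖ := rfl
      rw [hudef, hvdef]
      simp only [map_smul, ContinuousLinearMap.smul_apply, smul_eq_mul]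
      rw [hlameq, mul_inv]
      ring
    have hBuv_gt : 1 - η < B u v := by
      rw [hBuv]
      rw [show (lam n)⁻¹ * B (x n) (y n) = B (x n) (y n) / lam n by ring]
      rw [lt_div_iff₀ hlampos]
      exact hg
    obtain ⟨u₀, v₀, hu₀, hv₀, hBabs, hud, hvd⟩ :=
      hη u v hu1 hv1 (lt_of_lt_of_le hBuv_gt (le_abs_self _))
    -- show B u₀ v₀ = 1
    have hBdiff1 : |B (u - u₀) v| ≤ ε₀ := by
      have h1 : ‖B (u - u₀) v‖ ≤ ‖B (u - u₀)‖ * ‖v‖ := (B _).le_opNorm v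
      have h2 : ‖B (u - u₀)‖ ≤ ‖B‖ * ‖u - u₀‖ := B.le_opNorm _
      rw [Real.norm_eq_abs] at h1
      calc |B (u - u₀) v| ≤ (‖B‖ * ‖u - u₀‖) * ‖v‖ :=
            le_trans h1 (mul_le_mul_of_nonneg_right h2 (norm_nonneg _))
        _ = ‖u - u₀‖ := by rw [hBnorm, hv1]; ring
        _ ≤ ε₀ := le_of_lt hud
    have hBdiff2 : |B u₀ (v - v₀)| ≤ ε₀ := by
      have h1 : ‖B u₀ (v - v₀)‖ ≤ ‖B u₀‖ * ‖v - v₀‖ := (B _).le_opNorm _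
      have h2 : ‖B u₀‖ ≤ ‖B‖ * ‖u₀‖ := B.le_opNorm _
      rw [Real.norm_eq_abs] at h1
      calc |B u₀ (v - v₀)| ≤ (‖B‖ * ‖u₀‖) * ‖v - v₀‖ :=
            le_trans h1 (mul_le_mul_of_nonneg_right h2 (norm_nonneg _))
        _ = ‖v - v₀‖ := by rw [hBnorm, hu₀]; ring
        _ ≤ ε₀ := le_of_lt hvd
    have hexpand : B u₀ v₀ = B u v - B (u - u₀) v - B u₀ (v - v₀) := by
      simp only [map_sub, ContinuousLinearMap.sub_apply]
      ring
    have hBpos : 0 < B u₀ v₀ := by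
      rw [hexpand]
      have h1 := abs_le.mp hBdiff1
      have h2 := abs_le.mp hBdiff2
      have : (1:ℝ) - η - 2 * ε₀ > 0 := by
        have : ε₀ ≤ 1/8 := hε₀le
        linarith
      linarith
    have hB1 : B u₀ v₀ = 1 := by
      rcases (abs_eq (by norm_num : (0:ℝ) ≤ 1)).mp hBabs with h' | h'
      · exact h'
      · exfalso; rw [h'] at hBpos; linarith
    refine ⟨(u₀, v₀), fun _ => ⟨hu₀, hv₀, hB1, ?_⟩⟩
    have hxeq : x n = ‖x n‖ • u := by
      rw [hudef, smul_smul, mul_inv_cancel₀ (norm_ne_zero_iff.mpr hxne), one_smul]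
    have hyeq : y n = ‖y n‖ • v := by
      rw [hvdef, smul_smul, mul_inv_cancel₀ (norm_ne_zero_iff.mpr hyne), one_smul]
    have htxy : t (x n) (y n) = lam n • t u v := by
      have hlameq : lam n = ‖x n‖ * ‖y n‖ := rfl
      conv_lhs => rw [hxeq, hyeq]
      simp only [map_smul, ContinuousLinearMap.smul_apply, smul_smul]
      rw [hlameq, mul_comm]
    have hdiff : t (x n) (y n) - lam n • t u₀ v₀ = lam n • (t u v - t u₀ v₀) := by
      rw [htxy, smul_sub]
    rw [hdiff, norm_smul, Real.norm_eq_abs, abs_of_pos hlampos]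
    have hsplit : t u v - t u₀ v₀ = t (u - u₀) v + t u₀ (v - v₀) := by
      simp only [map_sub, ContinuousLinearMap.sub_apply]
      abel
    have hb1 : ‖t (u - u₀) v‖ ≤ ε₀ := by
      calc ‖t (u - u₀) v‖ ≤ ‖u - u₀‖ * ‖v‖ := h.norm_tmul_le _ _
        _ = ‖u - u₀‖ := by rw [hv1, mul_one]
        _ ≤ ε₀ := le_of_lt hud
    have hb2 : ‖t u₀ (v - v₀)‖ ≤ ε₀ := by
      calc ‖t u₀ (v - v₀)‖ ≤ ‖u₀‖ * ‖v - v₀‖ := h.norm_tmul_le _ _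
        _ = ‖v - v₀‖ := by rw [hu₀, one_mul]
        _ ≤ ε₀ := le_of_lt hvd
    have : ‖t u v - t u₀ v₀‖ ≤ 2 * ε₀ := by
      rw [hsplit]
      calc ‖t (u - u₀) v + t u₀ (v - v₀)‖ ≤ ‖t (u - u₀) v‖ + ‖t u₀ (v - v₀)‖ :=
            norm_add_le _ _
        _ ≤ 2 * ε₀ := by linarith
    calc lam n * ‖t u v - t u₀ v₀‖ ≤ lam n * (2 * ε₀) :=
          mul_le_mul_of_nonneg_left this (hlamnn n)
      _ = 2 * ε₀ * lam n := by ring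
  choose p hp using key
  -- the perturbed tensor
  set a : ℕ → X := fun n => if Good n then lam n • (p n).1 else 0 with hadef
  set b : ℕ → Y := fun n => if Good n then (p n).2 else 0 with hbdef
  set lamG : ℕ → ℝ := fun n => if Good n then lam n else 0 with hlamGdef
  have hlamGnn : ∀ n, 0 ≤ lamG n := by
    intro n; rw [hlamGdef]; dsimp only; split
    · exact hlamnn n
    · exact le_refl 0
  have hlamGle : ∀ n, lamG n ≤ lam n := by
    intro n; rw [hlamGdef]; dsimp only; split
    · exact le_refl _
    · exact hlamnn n
  have hlamGsum : Summable lamG := Summable.of_nonneg_of_le hlamGnn hlamGle hsum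
  have hab_norm : ∀ n, ‖a n‖ * ‖b n‖ = lamG n := by
    intro n
    rw [hadef, hbdef, hlamGdef]
    dsimp only
    by_cases hg : Good n
    · rw [if_pos hg, if_pos hg, if_pos hg, norm_smul, Real.norm_eq_abs,
        abs_of_nonneg (hlamnn n), (hp n hg).1, (hp n hg).2.1]
      ring
    · rw [if_neg hg, if_neg hg, if_neg hg, norm_zero, norm_zero, mul_zero]
  have habsum : Summable (fun n => ‖a n‖ * ‖b n‖) := by
    apply hlamGsum.congr; intro n; exact (hab_norm n).symm
  have htab : ∀ n, t (a n) (b n) = if Good n then lam n • t (p n).1 (p n).2 else 0 := by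
    intro n
    rw [hadef, hbdef]
    dsimp only
    by_cases hg : Good n
    · rw [if_pos hg, if_pos hg, if_pos hg, map_smul, ContinuousLinearMap.smul_apply]
    · rw [if_neg hg, if_neg hg, if_neg hg]
      simp
  have htabsum : Summable (fun n => t (a n) (b n)) := by
    apply Summable.of_norm
    apply Summable.of_nonneg_of_le (fun n => norm_nonneg _) _ hlamGsum
    intro n
    rw [← hab_norm n]
    exact h.norm_tmul_le _ _
  set z' : Z := ∑' n, t (a n) (b n) with hz'def
  have hz'sum : HasSum (fun n => t (a n) (b n)) z' := htabsum.hasSum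
  -- φ z' computation
  have hBab : ∀ n, B (a n) (b n) = lamG n := by
    intro n
    rw [hadef, hbdef, hlamGdef]
    dsimp only
    by_cases hg : Good n
    · rw [if_pos hg, if_pos hg, if_pos hg, map_smul, ContinuousLinearMap.smul_apply,
        smul_eq_mul, (hp n hg).2.2.1, mul_one]
    · rw [if_neg hg, if_neg hg, if_neg hg]
      simp
  set T : ℝ := ∑' n, lamG n with hTdef
  have hφz'2 : HasSum lamG (φ z') := by
    have h1 : HasSum (fun n => φ (t (a n) (b n))) (φ z') := φ.hasSum hz'sum
    apply h1.congr_fun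
    intro n
    rw [← hB, h.lift_tmul, hBab n]
  have hφz'T : φ z' = T := by rw [hTdef]; exact hφz'2.tsum_eq.symm
  have hTsum' : ∑' n, ‖a n‖ * ‖b n‖ = T := by
    rw [hTdef]; exact tsum_congr hab_norm
  have hz'le : ‖z'‖ ≤ T := by
    rw [h.norm_eq_sInf z']
    apply csInf_le
    · refine ⟨0, fun R hR => ?_⟩
      obtain ⟨x', y', hs', _, hReq'⟩ := hR
      rw [hReq']
      exact tsum_nonneg fun n => by positivity
    · exact ⟨a, b, habsum, hz'sum, hTsum'.symm⟩
  have hz'ge : T ≤ ‖z'‖ := by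
    have h1 : ‖φ z'‖ ≤ ‖φ‖ * ‖z'‖ := φ.le_opNorm z'
    rw [hφ1, one_mul, Real.norm_eq_abs] at h1
    calc T = φ z' := hφz'T.symm
      _ ≤ |φ z'| := le_abs_self _
      _ ≤ ‖z'‖ := h1
  have hz'norm : ‖z'‖ = T := le_antisymm hz'le hz'ge
  have hattains : AttainsProjNorm t z' :=
    ⟨a, b, habsum, hz'sum, by rw [hz'norm, hTsum']⟩
  -- distance estimate
  set d : ℕ → Z := fun n => t (x n) (y n) - t (a n) (b n) with hddef
  have hdsum : HasSum d (z - z') := hz.sub hz'sum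
  have hdbound : ∀ n, ‖d n‖ ≤ 2 * ε₀ * lam n + η⁻¹ * (lam n - B (x n) (y n)) := by
    intro n
    have hBd : B (x n) (y n) ≤ lam n := hBle n
    by_cases hg : Good n
    · have h1 : ‖d n‖ ≤ 2 * ε₀ * lam n := by
        rw [hddef]
        dsimp only
        rw [htab n, if_pos hg]
        exact (hp n hg).2.2.2
      have h2 : 0 ≤ η⁻¹ * (lam n - B (x n) (y n)) :=
        mul_nonneg (le_of_lt (inv_pos.mpr hηpos)) (sub_nonneg.mpr hBd)
      exact le_trans h1 (le_add_of_nonneg_right h2)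
    · have h1 : ‖d n‖ = ‖t (x n) (y n)‖ := by
        rw [hddef]; dsimp only; rw [htab n, if_neg hg, sub_zero]
      have h2 : ‖t (x n) (y n)‖ ≤ lam n := h.norm_tmul_le _ _
      have h3 : B (x n) (y n) ≤ (1 - η) * lam n := by
        simp only [hGooddef] at hg
        exact le_of_not_gt hg
      have h4 : η * lam n ≤ lam n - B (x n) (y n) := by linarith only [h3]
      have h5 : lam n ≤ η⁻¹ * (lam n - B (x n) (y n)) := by
        rw [inv_mul_eq_div, le_div_iff₀ hηpos]
        linarith only [h4]
      have h6 : 0 ≤ 2 * ε₀ * lam n :=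
        mul_nonneg (mul_nonneg (by norm_num) (le_of_lt hε₀pos)) (hlamnn n)
      have h7 : ‖d n‖ ≤ lam n := h1 ▸ h2
      calc ‖d n‖ ≤ lam n := h7
        _ ≤ η⁻¹ * (lam n - B (x n) (y n)) := h5
        _ ≤ 2 * ε₀ * lam n + η⁻¹ * (lam n - B (x n) (y n)) := le_add_of_nonneg_left h6
  have hgsum : Summable (fun n => 2 * ε₀ * lam n + η⁻¹ * (lam n - B (x n) (y n))) := by
    apply Summable.add
    · exact hsum.mul_left _
    · exact (hsum.sub hBsum.summable).mul_left _
  have hdnormsum : Summable (fun n => ‖d n‖) :=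
    Summable.of_nonneg_of_le (fun n => norm_nonneg _) hdbound hgsum
  have hdist : ‖z - z'‖ ≤ 2 * ε₀ * S + η⁻¹ * (S - r) := by
    have h1 : ‖z - z'‖ ≤ ∑' n, ‖d n‖ := by
      rw [← hdsum.tsum_eq]
      exact norm_tsum_le_tsum_norm hdnormsum
    have h2 : ∑' n, ‖d n‖ ≤ ∑' n, (2 * ε₀ * lam n + η⁻¹ * (lam n - B (x n) (y n))) :=
      Summable.tsum_le_tsum hdbound hdnormsum hgsum
    have h3 : ∑' n, (2 * ε₀ * lam n + η⁻¹ * (lam n - B (x n) (y n)))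
        = 2 * ε₀ * S + η⁻¹ * (S - r) := by
      rw [Summable.tsum_add (hsum.mul_left _) ((hsum.sub hBsum.summable).mul_left _),
        tsum_mul_left, tsum_mul_left, Summable.tsum_sub hsum hBsum.summable,
        hBsum.tsum_eq, hSdef]
    linarith
  -- final numeric estimate
  have hfinal : ‖z - z'‖ < ε := by
    have hSnn : 0 ≤ S := tsum_nonneg hlamnn
    have e1 : 2 * ε₀ * S < 2 * ε₀ * (r + δ) :=
      mul_lt_mul_of_pos_left hS (by positivity)
    have e2 : 2 * ε₀ * (r + δ) ≤ ε / 4 := by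
      have hrd : r + δ ≤ r + 1 := by linarith
      have : 2 * ε₀ * (r + δ) ≤ 2 * (ε / (8 * (r + 1))) * (r + 1) := by
        apply mul_le_mul (by linarith) hrd (by linarith) (by positivity)
      have heq : 2 * (ε / (8 * (r + 1))) * (r + 1) = ε / 4 := by
        field_simp
        ring
      linarith
    have e3 : η⁻¹ * (S - r) < η⁻¹ * δ := by
      apply mul_lt_mul_of_pos_left (by linarith) (inv_pos.mpr hηpos)
    have e4 : η⁻¹ * δ ≤ ε / 4 := by
      have : η⁻¹ * δ ≤ η⁻¹ * (η * ε / 4) := by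
        apply mul_le_mul_of_nonneg_left hδle (le_of_lt (inv_pos.mpr hηpos))
      have heq : η⁻¹ * (η * ε / 4) = ε / 4 := by
        field_simp
      linarith
    linarith
  refine ⟨z', ?_, hattains⟩
  rw [Metric.mem_ball, dist_eq_norm, ← norm_sub_rev]
  exact hfinal
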